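/- Let H be a Gomory–Hu tree of a weighted graph G. For any optimal Single-to-Single solution with representatives t_1*,...,t_q* and components V_1*,...,V_q* ordered so that w(δ(V_q*)) is maximal, there exist q−1 Gomory–Hu tree edges e^1,...,e^{q−1} whose corresponding cuts U(e^i) in G satisfy w(U(e^i)) ≤ w(δ(V_i*)) for each i ∈ [q−1], and such that deleting {e^1,...,e^{q−1}} from H separates all pairs t_i*, t_j* (i ≠ j). -/

import Mathlib

open scoped Classical

/-- The set of edges of `G` with exactly one endpoint in `S`. -/
noncomputable def boundary {V : Type*} [Fintype V] [DecidableEq V]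
    (G : SimpleGraph V) (S : Set V) : Finset (Sym2 V) :=
  Finset.univ.filter (fun e => e ∈ G.edgeSet ∧ ∃ u ∈ S, ∃ v ∈ Sᶜ, e = s(u, v))

namespace StmtAux

open SimpleGraph Walk

variable {V : Type*}

section Boundary

variable [Fintype V] [DecidableEq V] {G : SimpleGraph V} {S : Set V}

lemma boundary_subset (G : SimpleGraph V) (S : Set V) :
    ↑(boundary G S) ⊆ G.edgeSet := by
  intro e he
  rw [Finset.mem_coe, boundary, Finset.mem_filter] at he
  exact he.2.1

lemma mem_boundary {a b : V} (hab : G.Adj a b) (ha : a ∈ S) (hb : b ∉ S) :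
    s(a, b) ∈ boundary G S := by
  rw [boundary, Finset.mem_filter]
  exact ⟨Finset.mem_univ _, hab, a, ha, b, hb, rfl⟩

lemma walk_stays : ∀ {u v : V}, (G.deleteEdges ↑(boundary G S)).Walk u v → u ∈ S → v ∈ S := by
  intro u v p
  induction p with
  | nil => exact id
  | cons h' p ih =>
    intro hu
    rw [SimpleGraph.deleteEdges_adj] at h'
    apply ih
    by_contra hw
    exact h'.2 (mem_boundary h'.1 hu hw)

lemma boundary_separates {u v : V} (hu : u ∈ S) (hv : v ∉ S) :
    ¬ (G.deleteEdges ↑(boundary G S)).Reachable u v := by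
  intro h
  obtain ⟨p⟩ := h
  exact hv (walk_stays p hu)

end Boundary

section Tree

variable {H : SimpleGraph V} {r : V}

lemma exists_edge_split {e : Sym2 V} :
    ∀ {u v : V} (p : H.Walk u v), e ∈ p.edges →
      ∃ (x y : V) (h : H.Adj x y) (q1 : H.Walk u x) (q2 : H.Walk y v),
        p = q1.append (Walk.cons h q2) ∧ e = s(x, y) := by
  intro u v p
  induction p with
  | nil => intro he; simp at he
  | cons h' p ih =>
    intro he
    rw [Walk.edges_cons, List.mem_cons] at he
    rcases he with he | he
    · exact ⟨_, _, h', Walk.nil, p, (Walk.nil_append _).symm, he⟩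
    · obtain ⟨x, y, h, q1, q2, hq, he⟩ := ih he
      exact ⟨x, y, h, Walk.cons h' q1, q2, by rw [Walk.cons_append, ← hq], he⟩

lemma exists_cross {S : Set V} :
    ∀ {u v : V} (p : H.Walk u v), u ∈ S → v ∉ S →
      ∃ (x y : V) (h : H.Adj x y) (q1 : H.Walk u x) (q2 : H.Walk y v),
        p = q1.append (Walk.cons h q2) ∧ (∀ z ∈ q1.support, z ∈ S) ∧ y ∉ S := by
  intro u v p
  induction p with
  | nil => intro hu hv; exact absurd hu hv
  | @cons u w v h' p ih =>
    intro hu hv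
    by_cases hw : w ∈ S
    · obtain ⟨x, y, h, q1, q2, heq, hsub, hy⟩ := ih hw hv
      refine ⟨x, y, h, Walk.cons h' q1, q2, by rw [Walk.cons_append, ← heq], ?_, hy⟩
      intro z hz
      rw [Walk.support_cons, List.mem_cons] at hz
      rcases hz with rfl | hz
      · exact hu
      · exact hsub z hz
    · refine ⟨u, w, h', Walk.nil, p, (Walk.nil_append _).symm, ?_, hw⟩
      intro z hz
      rw [Walk.support_nil, List.mem_singleton] at hz
      subst hz; exact hu

variable (hH : H.IsTree) (P : ∀ x : V, H.Walk x r) (hP : ∀ x, (P x).IsPath)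

include hH hP

lemma path_eq_P {x : V} (q : H.Walk x r) (hq : q.IsPath) : q = P x :=
  congrArg Subtype.val (hH.IsAcyclic.path_unique ⟨q, hq⟩ ⟨P x, hP x⟩)

lemma step {x y : V} (hxy : H.Adj x y) :
    P x = Walk.cons hxy (P y) ∨ P y = Walk.cons hxy.symm (P x) := by
  by_cases hx : x ∈ (P y).support
  · right
    have h1 : ((P y).takeUntil x hx).append ((P y).dropUntil x hx) = P y :=
      Walk.take_spec _ hx
    have htp : ((P y).takeUntil x hx).IsPath := (hP y).takeUntil hx
    have hdp : ((P y).dropUntil x hx).IsPath := (hP y).dropUntil hx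
    have h2 : (P y).takeUntil x hx = Walk.cons hxy.symm Walk.nil := by
      have hpath : (Walk.cons hxy.symm (Walk.nil : H.Walk x x)).IsPath := by
        rw [Walk.cons_isPath_iff]
        refine ⟨Walk.IsPath.nil, ?_⟩
        rw [Walk.support_nil, List.mem_singleton]
        exact hxy.ne'
      exact congrArg Subtype.val
        (hH.IsAcyclic.path_unique ⟨(P y).takeUntil x hx, htp⟩ ⟨_, hpath⟩)
    have h3 : (P y).dropUntil x hx = P x := path_eq_P hH P hP _ hdp
    rw [← h1, h2, h3, Walk.cons_append, Walk.nil_append]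
  · left
    refine (path_eq_P hH P hP (Walk.cons hxy (P y)) ?_).symm
    rw [Walk.cons_isPath_iff]
    exact ⟨hP y, hx⟩

lemma g_step {x y : V} (hxy : H.Adj x y) {e : Sym2 V} (hne : s(x, y) ≠ e) :
    (e ∈ (P x).edges ↔ e ∈ (P y).edges) := by
  rcases step hH P hP hxy with h | h
  · rw [h, Walk.edges_cons, List.mem_cons, or_iff_right (fun h' => hne h'.symm)]
  · have hne' : s(y, x) ≠ e := by rwa [Sym2.eq_swap]
    rw [h, Walk.edges_cons, List.mem_cons, or_iff_right (fun h' => hne' h'.symm)]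

lemma g_walk {F : Set (Sym2 V)} {e : Sym2 V} (he : e ∈ F) :
    ∀ {u v : V}, (H.deleteEdges F).Walk u v → (e ∈ (P u).edges ↔ e ∈ (P v).edges) := by
  intro u v p
  induction p with
  | nil => exact Iff.rfl
  | cons h' p ih =>
    rw [SimpleGraph.deleteEdges_adj] at h'
    exact (g_step hH P hP h'.1 (fun hh => h'.2 (by rw [hh]; exact he))).trans ih

lemma suffix_eq {z x y : V} (h : H.Adj x y) (q1 : H.Walk z x) (q2 : H.Walk y r)
    (heq : P z = q1.append (Walk.cons h q2)) :
    q2 = P y ∧ P x = Walk.cons h (P y) := by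
  have hcons : (Walk.cons h q2).IsPath := by
    have hz := hP z
    rw [heq] at hz
    exact hz.of_append_right
  have hq2 : q2.IsPath := hcons.of_cons
  have e2 : q2 = P y := path_eq_P hH P hP _ hq2
  refine ⟨e2, ?_⟩
  rw [← e2]
  exact (path_eq_P hH P hP _ hcons).symm

lemma key_lt {bi aj bj : V} (hj : H.Adj aj bj)
    (hPaj : P aj = Walk.cons hj (P bj))
    (he : s(aj, bj) ∈ (P bi).edges) :
    (P bj).length < (P bi).length := by
  obtain ⟨x, y, h, q1, q2, heq, hxy⟩ := exists_edge_split (P bi) he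
  have hsuf := suffix_eq hH P hP h q1 q2 heq
  have hlen : (P bi).length = q1.length + (q2.length + 1) := by
    rw [heq, Walk.length_append, Walk.length_cons]
  rcases Sym2.eq_iff.mp hxy with ⟨hx, hy⟩ | ⟨hx, hy⟩
  · subst hx; subst hy
    have : (P bj).length = q2.length := by rw [← hsuf.1]
    omega
  · subst hx; subst hy
    have h1 : q2 = P aj := hsuf.1
    have : q2.length = (P bj).length + 1 := by rw [h1, hPaj, Walk.length_cons]
    omega

lemma cross_cases {Si Sj : Set V} (hdisj : ∀ x, x ∈ Si → x ∉ Sj)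
    {tj ai bi aj bj : V} (hi' : H.Adj ai bi) (hj' : H.Adj aj bj)
    (hai : ai ∈ Si) (haj : aj ∈ Sj)
    (rj : H.Walk tj aj) (sj : H.Walk bj r)
    (heqj : P tj = rj.append (Walk.cons hj' sj))
    (hsubj : ∀ z ∈ rj.support, z ∈ Sj)
    (hPai : P ai = Walk.cons hi' (P bi))
    (hPaj : P aj = Walk.cons hj' (P bj))
    (hgij : s(ai, bi) ∈ (P tj).edges) :
    (P bi).length < (P bj).length := by
  have hsj : sj = P bj := (suffix_eq hH P hP hj' rj sj heqj).1
  rw [heqj, Walk.edges_append, Walk.edges_cons, List.mem_append, List.mem_cons] at hgij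
  rcases hgij with hmem | heq | hmem
  · exact absurd (hsubj ai (rj.fst_mem_support_of_mem_edges hmem)) (hdisj ai hai)
  · rcases Sym2.eq_iff.mp heq with ⟨hx, hy⟩ | ⟨hx, hy⟩
    · exact absurd haj (hx ▸ hdisj ai hai)
    · -- ai = bj, bi = aj
      have l1 : (P ai).length = (P bi).length + 1 := by rw [hPai, Walk.length_cons]
      have l2 : (P aj).length = (P bj).length + 1 := by rw [hPaj, Walk.length_cons]
      rw [hx] at l1
      rw [← hy] at l2
      omega
  · rw [hsj] at hmem
    exact key_lt hH P hP hi' hPai hmem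

end Tree

end StmtAux

/-- Given a Gomory–Hu tree `H` of `G` (each tree edge `s(a,b)` carries a minimum
`a`–`b` cut `U s(a,b)` of `G`, and min cuts in `G` are witnessed on tree paths)
and an optimal Single-to-Single solution with representatives `t i` lying in
pairwise distinct components of `G - Cstar`, where the component of `t maxI` has
maximum boundary weight, there are `q - 1` tree edges (one for each `i ≠ maxI`)
whose corresponding cuts satisfy `w(U(e^i)) ≤ w(δ(V_i*))` and whose deletion
from `H` separates all pairs of representatives. -/
theorem stmt4 {V : Type*} [Fintype V] [DecidableEq V] (G H : SimpleGraph V)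
    (w : Sym2 V → ℝ) (hw : ∀ e, 0 ≤ w e) (hH : H.IsTree)
    (U : Sym2 V → Finset (Sym2 V))
    (hGHedge : ∀ a b : V, H.Adj a b →
      ↑(U s(a, b)) ⊆ G.edgeSet ∧
      ¬ (G.deleteEdges ↑(U s(a, b))).Reachable a b ∧
      ∀ D : Finset (Sym2 V), ↑D ⊆ G.edgeSet →
        ¬ (G.deleteEdges (↑D : Set (Sym2 V))).Reachable a b →
        ∑ e ∈ U s(a, b), w e ≤ ∑ e ∈ D, w e)
    (hGHpath : ∀ u v : V, ∀ p : H.Walk u v, p.IsPath →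
      ∀ D : Finset (Sym2 V), ↑D ⊆ G.edgeSet →
        ¬ (G.deleteEdges (↑D : Set (Sym2 V))).Reachable u v →
        ∃ e ∈ p.edges, ∑ e' ∈ U e, w e' ≤ ∑ e' ∈ D, w e')
    (q : ℕ) (hq : 1 ≤ q) (t : Fin q → V)
    (Cstar : Finset (Sym2 V)) (hC : ↑Cstar ⊆ G.edgeSet)
    (hsep : ∀ i j, i ≠ j → ¬ (G.deleteEdges ↑Cstar).Reachable (t i) (t j))
    (maxI : Fin q)
    (hmax : ∀ i,
      ∑ e ∈ boundary G ((G.deleteEdges ↑Cstar).connectedComponentMk (t i)).supp, w e ≤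
      ∑ e ∈ boundary G ((G.deleteEdges ↑Cstar).connectedComponentMk (t maxI)).supp, w e) :
    ∃ f : Fin q → Sym2 V,
      (∀ i, i ≠ maxI → f i ∈ H.edgeSet ∧
        ∑ e ∈ U (f i), w e ≤
          ∑ e ∈ boundary G ((G.deleteEdges ↑Cstar).connectedComponentMk (t i)).supp, w e) ∧
      (∀ i j, i ≠ j →
        ¬ (H.deleteEdges ↑((Finset.univ.filter (· ≠ maxI)).image f)).Reachable (t i) (t j)) := by
  classical
  open StmtAux SimpleGraph Walk in
  set G' := G.deleteEdges (↑Cstar : Set (Sym2 V)) with hG'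
  set S : Fin q → Set V := fun i => (G'.connectedComponentMk (t i)).supp with hSdef
  have htS : ∀ i, t i ∈ S i := fun i => by
    rw [hSdef]
    exact SimpleGraph.ConnectedComponent.mem_supp_iff _ _ |>.mpr rfl
  have hdisj : ∀ i j, i ≠ j → ∀ x, x ∈ S i → x ∉ S j := by
    intro i j hij x hxi hxj
    rw [hSdef, SimpleGraph.ConnectedComponent.mem_supp_iff] at hxi hxj
    exact hsep i j hij (SimpleGraph.ConnectedComponent.eq.mp (hxi.symm.trans hxj))
  have htmax : ∀ i, i ≠ maxI → (t maxI) ∉ S i := fun i hi =>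
    hdisj maxI i (fun h => hi h.symm) (t maxI) (htS maxI)
  -- choose root paths
  have hrp : ∀ x : V, ∃ p : H.Walk x (t maxI), p.IsPath := fun x => by
    obtain ⟨wlk⟩ := hH.isConnected.preconnected x (t maxI)
    exact ⟨wlk.toPath.1, wlk.toPath.2⟩
  choose P hP using hrp
  -- choose crossing edges
  have hcross : ∀ i : Fin q, ∃ ef : Sym2 V, i ≠ maxI →
      ∃ (a b : V) (h : H.Adj a b) (q1 : H.Walk (t i) a) (q2 : H.Walk b (t maxI)),
        ef = s(a, b) ∧ P (t i) = q1.append (Walk.cons h q2) ∧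
        (∀ z ∈ q1.support, z ∈ S i) ∧ a ∈ S i ∧ b ∉ S i := by
    intro i
    by_cases hi : i = maxI
    · exact ⟨s(t i, t i), fun h => absurd hi h⟩
    · obtain ⟨a, b, h, q1, q2, heq, hsub, hb⟩ :=
        StmtAux.exists_cross (P (t i)) (htS i) (htmax i hi)
      exact ⟨s(a, b), fun _ =>
        ⟨a, b, h, q1, q2, rfl, heq, hsub, hsub a q1.end_mem_support, hb⟩⟩
  choose f hf using hcross
  refine ⟨f, ?_, ?_⟩
  · intro i hi
    obtain ⟨a, b, h, q1, q2, hef, heq, hsub, ha, hb⟩ := hf i hi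
    constructor
    · rw [hef]
      exact h
    · rw [hef]
      exact (hGHedge a b h).2.2 (boundary G (S i))
        (StmtAux.boundary_subset G (S i))
        (StmtAux.boundary_separates ha hb)
  · intro i j hij hreach
    obtain ⟨pw⟩ := hreach
    have hginv : ∀ k : Fin q, k ≠ maxI →
        (f k ∈ (P (t i)).edges ↔ f k ∈ (P (t j)).edges) := by
      intro k hk
      have hmem : f k ∈ (↑((Finset.univ.filter (· ≠ maxI)).image f) : Set (Sym2 V)) := by
        rw [Finset.mem_coe, Finset.mem_image]
        exact ⟨k, Finset.mem_filter.mpr ⟨Finset.mem_univ _, hk⟩, rfl⟩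
      exact StmtAux.g_walk hH P hP hmem pw
    have hPmax : (P (t maxI)).edges = [] := by
      have : (Walk.nil : H.Walk (t maxI) (t maxI)) = P (t maxI) :=
        StmtAux.path_eq_P hH P hP _ Walk.IsPath.nil
      rw [← this, Walk.edges_nil]
    have hgself : ∀ k : Fin q, k ≠ maxI → f k ∈ (P (t k)).edges := by
      intro k hk
      obtain ⟨a, b, h, q1, q2, hef, heq, hsub, ha, hb⟩ := hf k hk
      rw [hef, heq, Walk.edges_append, Walk.edges_cons]
      exact List.mem_append.mpr (Or.inr List.mem_cons_self)
    by_cases hi : i = maxI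
    · have hj : j ≠ maxI := fun h => hij (hi ▸ h ▸ rfl)
      have := (hginv j hj).mpr (hgself j hj)
      rw [hi, hPmax] at this
      simp at this
    · by_cases hj : j = maxI
      · have := (hginv i hi).mp (hgself i hi)
        rw [hj, hPmax] at this
        simp at this
      · -- both differ from maxI
        obtain ⟨ai, bi, hi', ri, si, hefi, heqi, hsubi, hai, hbi⟩ := hf i hi
        obtain ⟨aj, bj, hj', rj, sj, hefj, heqj, hsubj, haj, hbj⟩ := hf j hj
        have hPai : P ai = Walk.cons hi' (P bi) :=
          (StmtAux.suffix_eq hH P hP hi' ri si heqi).2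
        have hPaj : P aj = Walk.cons hj' (P bj) :=
          (StmtAux.suffix_eq hH P hP hj' rj sj heqj).2
        have hgij : s(ai, bi) ∈ (P (t j)).edges := by
          rw [← hefi]
          exact (hginv i hi).mp (hgself i hi)
        have hgji : s(aj, bj) ∈ (P (t i)).edges := by
          rw [← hefj]
          exact (hginv j hj).mpr (hgself j hj)
        have hlt1 : (P bi).length < (P bj).length :=
          StmtAux.cross_cases hH P hP (hdisj i j hij) hi' hj' hai haj
            rj sj heqj hsubj hPai hPaj hgij
        have hlt2 : (P bj).length < (P bi).length :=
          StmtAux.cross_cases hH P hP (hdisj j i (Ne.symm hij)) hj' hi' haj hai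
            ri si heqi hsubi hPaj hPai hgji
        omega
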